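/- arXiv:1612.01500 — 2 statements merged into one kernel-verified Lean document; each statement's English description precedes it below -/
import Mathlib

section
/- Let $d, g, r \geq 1$ be integers with $r \cdot d < g + d$, let $a_{d-1} \geq 0$ and $a_d \geq 1$ be natural numbers, and let $T$ be a nonempty finite index set with natural numbers $g_\mu \geq 1$ and $b_\mu \geq 1$ for each $\mu \in T$. Suppose $(a_d)^r = \sum_{\mu \in T} b_\mu$ and $r \cdot a_{d-1} \cdot (a_d)^{r-1} \geq \sum_{\mu \in T} 2 g_\mu b_\mu$. Then $(g + d) \cdot a_{d-1} > 2 d \cdot a_d$. -/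
open Finset

/-- Let `d, g, r ≥ 1` be integers with `r*d < g + d`, let `a_{d-1} ≥ 0`,
`a_d ≥ 1` be naturals, and let `T` be a nonempty finite index set with naturals
`g_μ ≥ 1` and `b_μ ≥ 1`. Suppose `(a_d)^r = ∑_μ b_μ` and
`r * a_{d-1} * (a_d)^(r-1) ≥ ∑_μ 2 g_μ b_μ`. Then `(g + d) * a_{d-1} > 2d * a_d`. -/
theorem stmt_7 {ι : Type*} (d g r : ℕ) (hd : 1 ≤ d) (hg : 1 ≤ g) (hr : 1 ≤ r)
    (hrd : r * d < g + d) (ad1 ad : ℕ) (had : 1 ≤ ad)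
    (T : Finset ι) (hT : T.Nonempty) (gm bm : ι → ℕ)
    (hgm : ∀ μ ∈ T, 1 ≤ gm μ) (hbm : ∀ μ ∈ T, 1 ≤ bm μ)
    (hsum : ad ^ r = ∑ μ ∈ T, bm μ)
    (hineq : r * ad1 * ad ^ (r - 1) ≥ ∑ μ ∈ T, 2 * gm μ * bm μ) :
    (g + d) * ad1 > 2 * d * ad := by
  have h1 : ∑ μ ∈ T, 2 * bm μ ≤ ∑ μ ∈ T, 2 * gm μ * bm μ := by
    apply sum_le_sum
    intro μ hμ
    have := hgm μ hμ
    nlinarith [hbm μ hμ]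
  have h2 : 2 * ad ^ r ≤ r * ad1 * ad ^ (r - 1) := by
    calc 2 * ad ^ r = ∑ μ ∈ T, 2 * bm μ := by rw [hsum, mul_sum]
    _ ≤ _ := le_trans h1 hineq
  have hpow : ad ^ r = ad * ad ^ (r - 1) := by
    conv_lhs => rw [show r = (r - 1) + 1 by omega]
    ring
  have hpos : 0 < ad ^ (r - 1) := Nat.pow_pos had
  have h3 : 2 * ad ≤ r * ad1 := by
    have : (2 * ad) * ad ^ (r - 1) ≤ (r * ad1) * ad ^ (r - 1) := by
      calc (2 * ad) * ad ^ (r - 1) = 2 * ad ^ r := by rw [hpow]; ring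
      _ ≤ _ := h2
    exact Nat.le_of_mul_le_mul_right this hpos
  have h4 : 1 ≤ ad1 := by
    by_contra h
    have : ad1 = 0 := by omega
    simp [this] at h3
    omega
  nlinarith
end

section
/- Let $d, g, r \geq 1$ be integers with $g < r d < g + d$. Let $h \in \mathbb{Z}[T, T^{-1}]$ have nonnegative coefficients with $h_\nu = 0$ for $|\nu| > d$ and $h_d > 0$. Suppose there is a finite index set $M$, integers $g_\mu \geq 1$ and Laurent polynomials $p_\mu \in \mathbb{Z}[T, T^{-1}]$ with nonnegative coefficients such that $h^r = \sum_{\mu \in M} (T + 2 + T^{-1})^{g_\mu} \cdot p_\mu$, where each summand $(T + 2 + T^{-1})^{g_\mu} \cdot p_\mu$ has vanishing coefficients in all degrees $> r d$. Then $(g + d) \cdot h_{d-1} > 2 d \cdot h_d$. -/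
open LaurentPolynomial Finset

namespace Stmt9Aux

lemma mul_apply' (f q : ℤ[T;T⁻¹]) (x : ℤ) :
    (f * q).coeff x = ∑ a ∈ f.coeff.support, f.coeff a * q.coeff (x - a) := by
  conv_lhs => rw [← AddMonoidAlgebra.sum_coeff_single f, Finsupp.sum, Finset.sum_mul]
  rw [AddMonoidAlgebra.coeff_sum, Finsupp.finset_sum_apply]
  refine Finset.sum_congr rfl fun a ha => ?_
  rw [AddMonoidAlgebra.coeff_single_mul_apply, neg_add_eq_sub]

lemma mul_nonneg' {f q : ℤ[T;T⁻¹]} (hf : ∀ ν, 0 ≤ f.coeff ν) (hq : ∀ ν, 0 ≤ q.coeff ν) (x : ℤ) :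
    0 ≤ (f * q).coeff x := by
  rw [mul_apply']
  exact Finset.sum_nonneg fun a _ => mul_nonneg (hf a) (hq _)

lemma pow_nonneg' {f : ℤ[T;T⁻¹]} (hf : ∀ ν, 0 ≤ f.coeff ν) (n : ℕ) (x : ℤ) :
    0 ≤ (f ^ n).coeff x := by
  induction n generalizing x with
  | zero =>
    simp only [pow_zero]
    rw [AddMonoidAlgebra.one_def, AddMonoidAlgebra.coeff_single, Finsupp.single_apply]
    split <;> norm_num
  | succ n ih => rw [pow_succ]; exact mul_nonneg' ih hf x

lemma mul_vanish {f q : ℤ[T;T⁻¹]} {a b : ℤ} (hf : ∀ ν, a < ν → f.coeff ν = 0)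
    (hq : ∀ ν, b < ν → q.coeff ν = 0) : ∀ x, a + b < x → (f * q).coeff x = 0 := by
  intro x hx
  rw [mul_apply']
  refine Finset.sum_eq_zero fun k hk => ?_
  by_cases hka : a < k
  · rw [hf k hka, zero_mul]
  · rw [hq _ (by omega), mul_zero]

lemma mul_top {f q : ℤ[T;T⁻¹]} {a b : ℤ} (hf : ∀ ν, a < ν → f.coeff ν = 0)
    (hq : ∀ ν, b < ν → q.coeff ν = 0) : (f * q).coeff (a + b) = f.coeff a * q.coeff b := by
  rw [mul_apply', Finset.sum_eq_single a (fun k hk hne => ?_) (fun ha => ?_)]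
  · rw [add_sub_cancel_left]
  · have hk' : f.coeff k ≠ 0 := Finsupp.mem_support_iff.mp hk
    have : k < a := by
      rcases lt_or_ge a k with hlt | hge
      · exact absurd (hf k hlt) hk'
      · omega
    rw [hq _ (by omega), mul_zero]
  · rw [Finsupp.notMem_support_iff.mp ha, zero_mul]

lemma mul_top_pred {f q : ℤ[T;T⁻¹]} {a b : ℤ} (hf : ∀ ν, a < ν → f.coeff ν = 0)
    (hq : ∀ ν, b < ν → q.coeff ν = 0) :
    (f * q).coeff (a + b - 1) = f.coeff a * q.coeff (b - 1) + f.coeff (a - 1) * q.coeff b := by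
  rw [mul_apply']
  have key : ∀ k : ℤ, k ∉ ({a - 1, a} : Finset ℤ) → f.coeff k * q.coeff (a + b - 1 - k) = 0 := by
    intro k hk
    simp only [Finset.mem_insert, Finset.mem_singleton] at hk
    push_neg at hk
    by_cases hka : a < k
    · rw [hf k hka, zero_mul]
    · rw [hq _ (by omega), mul_zero]
  have h1 : ∑ k ∈ f.coeff.support, f.coeff k * q.coeff (a + b - 1 - k)
      = ∑ k ∈ f.coeff.support ∪ {a - 1, a}, f.coeff k * q.coeff (a + b - 1 - k) := by
    refine Finset.sum_subset Finset.subset_union_left fun x _ hx => ?_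
    rw [Finsupp.notMem_support_iff.mp hx, zero_mul]
  have h2 : ∑ k ∈ ({a - 1, a} : Finset ℤ), f.coeff k * q.coeff (a + b - 1 - k)
      = ∑ k ∈ f.coeff.support ∪ {a - 1, a}, f.coeff k * q.coeff (a + b - 1 - k) :=
    Finset.sum_subset Finset.subset_union_right fun x _ hx => key x hx
  rw [h1, ← h2, Finset.sum_pair (by omega : a - 1 ≠ a)]
  have e1 : a + b - 1 - (a - 1) = b := by ring
  have e2 : a + b - 1 - a = b - 1 := by ring
  rw [e1, e2]; ring

lemma pow_vanish {f : ℤ[T;T⁻¹]} {b : ℤ} (hf : ∀ ν, b < ν → f.coeff ν = 0) (n : ℕ) (hn : 1 ≤ n) :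
    ∀ x, (n : ℤ) * b < x → (f ^ n).coeff x = 0 := by
  induction n, hn using Nat.le_induction with
  | base => intro x hx; rw [pow_one]; exact hf x (by simpa using hx)
  | succ n hn ih =>
    intro x hx
    rw [pow_succ]
    refine mul_vanish ih hf x ?_
    push_cast at hx; linarith

lemma pow_top {f : ℤ[T;T⁻¹]} {b : ℤ} (hf : ∀ ν, b < ν → f.coeff ν = 0) (n : ℕ) (hn : 1 ≤ n) :
    (f ^ n).coeff ((n : ℤ) * b) = (f.coeff b) ^ n := by
  induction n, hn using Nat.le_induction with
  | base => simp
  | succ n hn ih =>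
    have e : ((n : ℤ) + 1) * b = (n : ℤ) * b + b := by ring
    rw [pow_succ, show ((n + 1 : ℕ) : ℤ) = (n : ℤ) + 1 by push_cast; ring, e,
      mul_top (pow_vanish hf n hn) hf, ih, pow_succ]

lemma pow_top_pred {f : ℤ[T;T⁻¹]} {b : ℤ} (hf : ∀ ν, b < ν → f.coeff ν = 0) (n : ℕ) (hn : 1 ≤ n) :
    (f ^ n).coeff ((n : ℤ) * b - 1) = (n : ℤ) * (f.coeff b) ^ (n - 1) * f.coeff (b - 1) := by
  induction n, hn using Nat.le_induction with
  | base => simp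
  | succ n hn ih =>
    have e : ((n : ℤ) + 1) * b - 1 = (n : ℤ) * b + b - 1 := by ring
    rw [show ((n + 1 : ℕ) : ℤ) = (n : ℤ) + 1 by push_cast; ring, e, pow_succ,
      mul_top_pred (pow_vanish hf n hn) hf, ih, pow_top hf n hn]
    have e2 : n - 1 + 1 = n := Nat.sub_add_cancel hn
    have e3 : (f.coeff b) ^ (n - 1) * f.coeff b = (f.coeff b) ^ n := by rw [← pow_succ, e2]
    have e4 : n + 1 - 1 = n := rfl
    rw [e4]
    linear_combination (n : ℤ) * f.coeff (b - 1) * e3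

lemma c_eq : (T 1 + 2 + T (-1) : ℤ[T;T⁻¹]) =
    AddMonoidAlgebra.single 1 1 + AddMonoidAlgebra.single 0 2 + AddMonoidAlgebra.single (-1) 1 := by
  have h2 : (2 : ℤ[T;T⁻¹]) = AddMonoidAlgebra.single 0 2 := by
    have : (2 : ℤ[T;T⁻¹]) = 1 + 1 := by norm_num
    rw [this, AddMonoidAlgebra.one_def, ← AddMonoidAlgebra.single_add]; norm_num
  rw [T, T, h2]

lemma c_nonneg (ν : ℤ) : 0 ≤ (T 1 + 2 + T (-1) : ℤ[T;T⁻¹]).coeff ν := by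
  rw [c_eq, AddMonoidAlgebra.coeff_add, AddMonoidAlgebra.coeff_add, Finsupp.add_apply,
    Finsupp.add_apply, AddMonoidAlgebra.coeff_single, AddMonoidAlgebra.coeff_single,
    AddMonoidAlgebra.coeff_single, Finsupp.single_apply, Finsupp.single_apply,
    Finsupp.single_apply]
  split <;> split <;> split <;> norm_num

lemma c_mul_apply (q : ℤ[T;T⁻¹]) (n : ℤ) :
    ((T 1 + 2 + T (-1) : ℤ[T;T⁻¹]) * q).coeff n = q.coeff (n - 1) + 2 * q.coeff n + q.coeff (n + 1) := by
  rw [c_eq, add_mul, add_mul, AddMonoidAlgebra.coeff_add, AddMonoidAlgebra.coeff_add,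
    Finsupp.add_apply, Finsupp.add_apply,
    AddMonoidAlgebra.coeff_single_mul_apply, AddMonoidAlgebra.coeff_single_mul_apply,
    AddMonoidAlgebra.coeff_single_mul_apply]
  rw [show -(1:ℤ) + n = n - 1 by ring, show -(0:ℤ) + n = n by ring,
    show -(-1:ℤ) + n = n + 1 by ring]
  ring

end Stmt9Aux

/-- Let `d, g, r ≥ 1` be integers with `g < rd < g + d`. Let
`h ∈ ℤ[T,T⁻¹]` have nonnegative coefficients with `h_ν = 0` for `|ν| > d` and
`h_d > 0`. Suppose there is a finite index set `M`, integers `g_μ ≥ 1` and Laurent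
polynomials `p_μ` with nonnegative coefficients such that
`h^r = ∑_μ (T + 2 + T⁻¹)^(g_μ) * p_μ`, where each summand has vanishing coefficients
in all degrees `> rd`. Then `(g + d) * h_{d-1} > 2d * h_d`. -/
theorem stmt_9 {ι : Type*} (d g r : ℕ) (hd : 1 ≤ d) (hg : 1 ≤ g) (hr : 1 ≤ r)
    (hgrd : g < r * d) (hrdg : r * d < g + d)
    (h : ℤ[T;T⁻¹]) (hnonneg : ∀ ν : ℤ, 0 ≤ h.coeff ν)
    (hvanish : ∀ ν : ℤ, (d : ℤ) < |ν| → h.coeff ν = 0) (htop : 0 < h.coeff d)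
    (M : Finset ι) (gm : ι → ℕ) (hgm : ∀ μ ∈ M, 1 ≤ gm μ)
    (p : ι → ℤ[T;T⁻¹]) (hp : ∀ μ ∈ M, ∀ ν : ℤ, 0 ≤ (p μ).coeff ν)
    (hdecomp : h ^ r = ∑ μ ∈ M, (T 1 + 2 + T (-1) : ℤ[T;T⁻¹]) ^ gm μ * p μ)
    (hbound : ∀ μ ∈ M, ∀ n : ℤ, (r * d : ℤ) < n →
      ((T 1 + 2 + T (-1) : ℤ[T;T⁻¹]) ^ gm μ * p μ).coeff n = 0) :
    ((g : ℤ) + d) * h.coeff ((d : ℤ) - 1) > 2 * d * h.coeff d := by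
  set c : ℤ[T;T⁻¹] := T 1 + 2 + T (-1) with hc
  set N : ℤ := (r : ℤ) * d with hN
  -- upper vanishing for h
  have hfup : ∀ ν : ℤ, (d : ℤ) < ν → h.coeff ν = 0 :=
    fun ν hν => hvanish ν (lt_of_lt_of_le hν (le_abs_self ν))
  -- per-summand inequality
  have key : ∀ μ ∈ M, 2 * ((c ^ gm μ * p μ).coeff N) ≤ (c ^ gm μ * p μ).coeff (N - 1) := by
    intro μ hμ
    set q : ℤ[T;T⁻¹] := c ^ (gm μ - 1) * p μ with hqdef
    have hsplit : c ^ gm μ * p μ = c * q := by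
      have h1 : gm μ - 1 + 1 = gm μ := Nat.sub_add_cancel (hgm μ hμ)
      rw [hqdef, ← mul_assoc, ← pow_succ', h1]
    have hqn : ∀ ν : ℤ, 0 ≤ q.coeff ν :=
      fun ν => Stmt9Aux.mul_nonneg' (Stmt9Aux.pow_nonneg' Stmt9Aux.c_nonneg _) (hp μ hμ) ν
    have hz : (c * q).coeff (N + 1) = 0 := by
      rw [← hsplit]
      exact hbound μ hμ (N + 1) (lt_add_one N)
    rw [Stmt9Aux.c_mul_apply] at hz
    have e : N + 1 - 1 = N := by ring
    rw [e] at hz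
    have hq1 : q.coeff N = 0 := by linarith [hqn N, hqn (N + 1), hqn (N + 1 + 1)]
    have hq2 : q.coeff (N + 1) = 0 := by linarith [hqn N, hqn (N + 1), hqn (N + 1 + 1)]
    rw [hsplit, Stmt9Aux.c_mul_apply, Stmt9Aux.c_mul_apply]
    have e1 : N - 1 - 1 = N - 2 := by ring
    have e2 : N - 1 + 1 = N := by ring
    rw [e1, e2, hq1, hq2]
    linarith [hqn (N - 2), hqn (N - 1)]
  -- top two coefficients of h^r
  have hsumN : ∑ μ ∈ M, (c ^ gm μ * p μ).coeff N = h.coeff d ^ r := by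
    rw [← Finsupp.finset_sum_apply, ← AddMonoidAlgebra.coeff_sum, ← hdecomp]
    exact Stmt9Aux.pow_top hfup r hr
  have hsumN1 : ∑ μ ∈ M, (c ^ gm μ * p μ).coeff (N - 1)
      = (r : ℤ) * h.coeff d ^ (r - 1) * h.coeff ((d : ℤ) - 1) := by
    rw [← Finsupp.finset_sum_apply, ← AddMonoidAlgebra.coeff_sum, ← hdecomp]
    exact Stmt9Aux.pow_top_pred hfup r hr
  have main : 2 * h.coeff d ^ r ≤ (r : ℤ) * h.coeff d ^ (r - 1) * h.coeff ((d : ℤ) - 1) := by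
    rw [← hsumN, ← hsumN1, Finset.mul_sum]
    exact Finset.sum_le_sum key
  -- divide by h d ^ (r-1)
  have hP : (0 : ℤ) < h.coeff d ^ (r - 1) := pow_pos htop _
  have hpow : h.coeff d ^ r = h.coeff d ^ (r - 1) * h.coeff d := by
    rw [← pow_succ, Nat.sub_add_cancel hr]
  have hdiv : 2 * h.coeff d ≤ (r : ℤ) * h.coeff ((d : ℤ) - 1) := by
    have hm : h.coeff d ^ (r - 1) * (2 * h.coeff d) ≤ h.coeff d ^ (r - 1) * ((r : ℤ) * h.coeff ((d : ℤ) - 1)) := by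
      rw [hpow] at main
      linarith [main]
    exact le_of_mul_le_mul_left hm hP
  have hpos : (0 : ℤ) < h.coeff ((d : ℤ) - 1) := by
    rcases lt_or_eq_of_le (hnonneg ((d : ℤ) - 1)) with hlt | heq
    · exact hlt
    · exfalso; rw [← heq] at hdiv; simp at hdiv; linarith
  have hcast : (r : ℤ) * d < (g : ℤ) + d := by exact_mod_cast hrdg
  have hd1 : (1 : ℤ) ≤ d := by exact_mod_cast hd
  nlinarith [mul_lt_mul_of_pos_right hcast hpos,
    mul_le_mul_of_nonneg_left hdiv (by linarith : (0 : ℤ) ≤ (d : ℤ))]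
end
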